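/- Let (K, T, w, A) be a WSC satisfying the exactly-two condition, and suppose w(ab) = 1 or w(ab) = −1 for every edge ab of K. Then π₁(K, w, A) is isomorphic to π₁(K, 𝟙, A), where 𝟙 is the constant weight function assigning 1 to every edge (the group that the paper identifies with the ordinary fundamental group of K). -/

import Mathlib

open scoped Classical

variable {V : Type*}

/-- Generators of the weighted fundamental group: edges `ab` of `K` with `a < b`. -/
def WGen [LinearOrder V] (K : SimpleGraph V) : Type _ :=
  {p : V × V // p.1 < p.2 ∧ K.Adj p.1 p.2}

/-- The relators of the weighted fundamental group: (1) `g_{ab}^{w(ab)}` for edges of the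
spanning tree `A`; (2) `g_{ab}^{w(ab)} · (g_{av}^{w(av)} · g_{vb}^{w(vb)})⁻¹` for 2-simplices
`{a, v, b} ∈ T` with `a < v < b`. -/
def WRelators [LinearOrder V] (K : SimpleGraph V) (T : Set (Finset V))
    (w : Sym2 V → ℤ) (A : SimpleGraph V) : Set (FreeGroup (WGen K)) :=
  {r | ∃ e : WGen K, A.Adj e.1.1 e.1.2 ∧ r = FreeGroup.of e ^ w s(e.1.1, e.1.2)} ∪
  {r | ∃ (a v b : V) (hav : a < v) (hvb : v < b)
       (h1 : K.Adj a v) (h2 : K.Adj v b) (h3 : K.Adj a b),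
       ({a, v, b} : Finset V) ∈ T ∧
       r = FreeGroup.of (⟨(a, b), hav.trans hvb, h3⟩ : WGen K) ^ w s(a, b) *
         (FreeGroup.of (⟨(a, v), hav, h1⟩ : WGen K) ^ w s(a, v) *
          FreeGroup.of (⟨(v, b), hvb, h2⟩ : WGen K) ^ w s(v, b))⁻¹}

/-- The weighted fundamental group `π₁(K, w, A)` of the WSC `(K, T, w, A)`,
as a presented group. -/
def wpi1 [LinearOrder V] (K : SimpleGraph V) (T : Set (Finset V))
    (w : Sym2 V → ℤ) (A : SimpleGraph V) : Type _ :=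
  PresentedGroup (WRelators K T w A)

noncomputable instance [LinearOrder V] (K : SimpleGraph V) (T : Set (Finset V))
    (w : Sym2 V → ℤ) (A : SimpleGraph V) : Group (wpi1 K T w A) := by
  unfold wpi1; infer_instance

/-- `(K, T, w, A)` is a weighted simplicial complex: `K` is a connected simple graph,
`T` is a set of 2-simplices (unordered triples of distinct pairwise adjacent vertices),
and `A` is a spanning tree of `K`. -/
structure IsWSC (K : SimpleGraph V) (T : Set (Finset V))
    (w : Sym2 V → ℤ) (A : SimpleGraph V) : Prop where
  conn : K.Connected
  tri : ∀ t ∈ T, ∃ a v b : V, a ≠ v ∧ v ≠ b ∧ a ≠ b ∧ t = {a, v, b} ∧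
        K.Adj a v ∧ K.Adj v b ∧ K.Adj a b
  tree : A.IsTree
  le : A ≤ K

/-- Exactly two of the three edges of every 2-simplex of `T` lie in the tree `A`. -/
def ExactlyTwo [LinearOrder V] (T : Set (Finset V)) (A : SimpleGraph V) : Prop :=
  ∀ a v b : V, a < v → v < b → ({a, v, b} : Finset V) ∈ T →
    ((if A.Adj a b then 1 else 0) + (if A.Adj a v then 1 else 0) +
      (if A.Adj v b then 1 else 0) : ℕ) = 2

lemma mk_rel {α : Type*} (rels : Set (FreeGroup α)) {r : FreeGroup α} (hr : r ∈ rels) :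
    (QuotientGroup.mk r : PresentedGroup rels) = 1 :=
  (QuotientGroup.eq_one_iff r).mpr (Subgroup.subset_normalClosure hr)

/-- Auxiliary homomorphism sending `of e` to `of e ^ c(e)`. -/
noncomputable def wHom [LinearOrder V] (K : SimpleGraph V) (T : Set (Finset V))
    (w₁ w₂ c : Sym2 V → ℤ) (A : SimpleGraph V)
    (h : ∀ a b : V, K.Adj a b → c s(a, b) * w₁ s(a, b) = w₂ s(a, b)) :
    wpi1 K T w₁ A →* wpi1 K T w₂ A :=
  PresentedGroup.toGroup
    (f := fun e => (PresentedGroup.of e : wpi1 K T w₂ A) ^ c s(e.1.1, e.1.2)) (by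
    rintro r hr
    rw [WRelators, Set.mem_union] at hr
    rcases hr with ⟨e, hA, rfl⟩ | ⟨a, v, b, hav, hvb, h1, h2, h3, hT, rfl⟩
    · rw [map_zpow, FreeGroup.lift_apply_of, ← zpow_mul, h _ _ e.2.2]
      have := mk_rel (WRelators K T w₂ A) (Or.inl ⟨e, hA, rfl⟩)
      simpa [PresentedGroup.of] using PresentedGroup.mk_eq_one_iff.mpr
        (Subgroup.subset_normalClosure (show _ ∈ WRelators K T w₂ A from Or.inl ⟨e, hA, rfl⟩))
    · erw [map_mul, map_inv, map_mul, map_zpow, map_zpow, map_zpow,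
        FreeGroup.lift_apply_of, FreeGroup.lift_apply_of, FreeGroup.lift_apply_of,
        ← zpow_mul, ← zpow_mul, ← zpow_mul]
      dsimp only
      rw [h _ _ h3, h _ _ h1, h _ _ h2]
      have := mk_rel (WRelators K T w₂ A)
        (Or.inr ⟨a, v, b, hav, hvb, h1, h2, h3, hT, rfl⟩)
      exact PresentedGroup.mk_eq_one_iff.mpr
        (Subgroup.subset_normalClosure (show _ ∈ WRelators K T w₂ A from
          Or.inr ⟨a, v, b, hav, hvb, h1, h2, h3, hT, rfl⟩)))

@[simp] lemma wHom_of [LinearOrder V] (K : SimpleGraph V) (T : Set (Finset V))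
    (w₁ w₂ c : Sym2 V → ℤ) (A : SimpleGraph V)
    (h : ∀ a b : V, K.Adj a b → c s(a, b) * w₁ s(a, b) = w₂ s(a, b)) (e : WGen K) :
    wHom K T w₁ w₂ c A h (PresentedGroup.of e) =
      (PresentedGroup.of e : wpi1 K T w₂ A) ^ c s(e.1.1, e.1.2) :=
  PresentedGroup.toGroup.of _

/-- Corollary 2.10. If `(K, T, w, A)` satisfies the exactly-two condition and
every weight is `1` or `-1`, then `π₁(K, w, A)` is isomorphic to `π₁(K, 𝟙, A)` where `𝟙` is
the constant weight function `1` (the group that the paper identifies with the ordinary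
fundamental group of `K`). -/
theorem weighted_pi1_pm_one [LinearOrder V] (K : SimpleGraph V) (T : Set (Finset V))
    (w : Sym2 V → ℤ) (A : SimpleGraph V) (hwsc : IsWSC K T w A) (h2 : ExactlyTwo T A)
    (hw : ∀ a b : V, K.Adj a b → w s(a, b) = 1 ∨ w s(a, b) = -1) :
    Nonempty (wpi1 K T w A ≃* wpi1 K T (fun _ => 1) A) := by
  have hsq : ∀ a b : V, K.Adj a b → w s(a, b) * w s(a, b) = 1 := by
    intro a b hab
    rcases hw a b hab with h' | h' <;> rw [h'] <;> ring
  have h1 : ∀ a b : V, K.Adj a b →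
      w s(a, b) * w s(a, b) = (fun _ : Sym2 V => (1 : ℤ)) s(a, b) := hsq
  have h2' : ∀ a b : V, K.Adj a b →
      w s(a, b) * (fun _ : Sym2 V => (1 : ℤ)) s(a, b) = w s(a, b) := by
    intro a b hab; simp
  refine ⟨MonoidHom.toMulEquiv (wHom K T w (fun _ => 1) w A h1)
    (wHom K T (fun _ => 1) w w A h2') ?_ ?_⟩
  · refine PresentedGroup.ext fun e => ?_
    erw [MonoidHom.comp_apply, wHom_of, map_zpow, wHom_of, ← zpow_mul,
      hsq _ _ e.2.2, zpow_one, MonoidHom.id_apply]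
  · refine PresentedGroup.ext fun e => ?_
    erw [MonoidHom.comp_apply, wHom_of, map_zpow, wHom_of, ← zpow_mul,
      hsq _ _ e.2.2, zpow_one, MonoidHom.id_apply]
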